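/- There is no Lebesgue-integrable nonnegative density K on the box [0,1]² such that, for every finite approximation set A contained in [0,1]², the weighted hypervolume ∫_{Dom_r(A)} K(y) dy equals the exact integral R₂ improvement ∫₀¹ (h_r(λ) − h_A(λ))₊ dλ, where r = (1,1) and z⁺ = (0,0). Specifically, for A = {(1,c)} with 0 < c < 1, the weighted hypervolume is zero while the R₂ improvement is positive. -/

import Mathlib

open MeasureTheory

/-- Weighted Tchebycheff scalarization with utopian point `(0,0)` in two objectives. -/
noncomputable def tcheb (l : ℝ) (y : ℝ × ℝ) : ℝ := max (l * y.1) ((1 - l) * y.2)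

/-- Scalarization envelope of a finite nonempty set. -/
noncomputable def env (A : Finset (ℝ × ℝ)) (hA : A.Nonempty) (l : ℝ) : ℝ :=
  A.inf' hA (fun a => tcheb l a)

/-- Dominated region of a finite set bounded by the reference point `(1,1)`. -/
def dom (A : Finset (ℝ × ℝ)) : Set (ℝ × ℝ) := ⋃ a ∈ A, Set.Icc a (1, 1)

theorem no_objective_space_weighted_HV_representation :
    ¬ ∃ K : ℝ × ℝ → ℝ,
      IntegrableOn K (Set.Icc ((0 : ℝ), (0 : ℝ)) (1, 1)) ∧
      (∀ y, 0 ≤ K y) ∧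
      ∀ (A : Finset (ℝ × ℝ)) (hA : A.Nonempty),
        (A : Set (ℝ × ℝ)) ⊆ Set.Icc ((0 : ℝ), (0 : ℝ)) (1, 1) →
        ∫ y in dom A, K y =
          ∫ l in (0 : ℝ)..1, max (tcheb l (1, 1) - env A hA l) 0 := by
  rintro ⟨K, hKint, hKnn, hK⟩
  set A : Finset (ℝ × ℝ) := {((1:ℝ), (1/2:ℝ))} with hAdef
  have hA : A.Nonempty := ⟨_, Finset.mem_singleton_self _⟩
  have hsub : (A : Set (ℝ × ℝ)) ⊆ Set.Icc ((0:ℝ),(0:ℝ)) (1,1) := by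
    intro p hp
    simp only [hAdef, Finset.coe_singleton, Set.mem_singleton_iff] at hp
    subst hp
    constructor <;> constructor <;> norm_num
  have h := hK A hA hsub
  have henv : ∀ l, env A hA l = max (l * 1) ((1 - l) * (1/2)) := by
    intro l
    simp [env, hAdef, tcheb]
  have hdom : dom A = Set.Icc ((1:ℝ), (1/2:ℝ)) ((1:ℝ),(1:ℝ)) := by
    simp [dom, hAdef]
  have hzero : ∫ y in dom A, K y = 0 := by
    rw [hdom]
    apply MeasureTheory.setIntegral_measure_zero K
    rw [Set.Icc_prod_eq, MeasureTheory.Measure.volume_eq_prod, MeasureTheory.Measure.prod_prod]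
    simp [Real.volume_Icc]
  have hcont : Continuous (fun l : ℝ => max (tcheb l ((1:ℝ),(1:ℝ)) - env A hA l) 0) := by
    have : (fun l : ℝ => max (tcheb l ((1:ℝ),(1:ℝ)) - env A hA l) 0)
        = fun l : ℝ => max (max (l * 1) ((1 - l) * 1) - max (l * 1) ((1 - l) * (1/2))) 0 := by
      funext l; rw [henv l]; rfl
    rw [this]
    fun_prop
  have h1 : 0 < ∫ l in (0:ℝ)..(1/2:ℝ), max (tcheb l ((1:ℝ),(1:ℝ)) - env A hA l) 0 := by
    apply intervalIntegral.intervalIntegral_pos_of_pos_on (hcont.intervalIntegrable _ _)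
    · intro x hx
      obtain ⟨hx0, hx1⟩ := hx
      rw [henv x]
      have e1 : tcheb x ((1:ℝ),(1:ℝ)) = 1 - x := by
        simp only [tcheb]
        rw [max_eq_right] <;> nlinarith
      rw [e1]
      have h2 : max (x * 1) ((1 - x) * (1/2)) < 1 - x := by
        apply max_lt <;> nlinarith
      have : 0 < 1 - x - max (x * 1) ((1 - x) * (1/2)) := by linarith
      exact lt_max_of_lt_left this
    · norm_num
  have h2 : 0 ≤ ∫ l in (1/2:ℝ)..1, max (tcheb l ((1:ℝ),(1:ℝ)) - env A hA l) 0 := by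
    apply intervalIntegral.integral_nonneg (by norm_num)
    intro x _
    exact le_max_right _ _
  have hsplit : (∫ l in (0:ℝ)..1, max (tcheb l ((1:ℝ),(1:ℝ)) - env A hA l) 0)
      = (∫ l in (0:ℝ)..(1/2:ℝ), max (tcheb l ((1:ℝ),(1:ℝ)) - env A hA l) 0)
      + ∫ l in (1/2:ℝ)..1, max (tcheb l ((1:ℝ),(1:ℝ)) - env A hA l) 0 := by
    rw [intervalIntegral.integral_add_adjacent_intervals
      (hcont.intervalIntegrable _ _) (hcont.intervalIntegrable _ _)]
  rw [hzero] at h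
  rw [hsplit] at h
  linarith
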